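/- The number S₂(n) of RNA secondary structures on n vertices satisfies the recursion S₂(n) = S₂(n−1) + Σ_{j=0}^{n−3} S₂(n−2−j)·S₂(j) for n ≥ 3, with initial values S₂(n) = 1 for 0 ≤ n ≤ 2. -/

import Mathlib

/-- `A` is an RNA secondary structure on `{1, …, n}`: arcs `(i,j)` with
`1 ≤ i`, `i + 2 ≤ j ≤ n` (no arcs between adjacent vertices), each vertex incident to at
most one arc, and no two arcs cross. -/
def IsSecStr (n : ℕ) (A : Finset (ℕ × ℕ)) : Prop :=
  (∀ p ∈ A, 1 ≤ p.1 ∧ p.1 + 2 ≤ p.2 ∧ p.2 ≤ n) ∧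
  (∀ p ∈ A, ∀ q ∈ A, p ≠ q →
    p.1 ≠ q.1 ∧ p.1 ≠ q.2 ∧ p.2 ≠ q.1 ∧ p.2 ≠ q.2) ∧
  (∀ p ∈ A, ∀ q ∈ A, ¬(p.1 < q.1 ∧ q.1 < p.2 ∧ p.2 < q.2))

/-- The number of RNA secondary structures on `n` vertices. -/
noncomputable def S₂ (n : ℕ) : ℕ := Nat.card {A : Finset (ℕ × ℕ) // IsSecStr n A}

open Classical in
/-- The finset of all RNA secondary structures on `n` vertices. -/
noncomputable def SS (n : ℕ) : Finset (Finset (ℕ × ℕ)) :=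
  ((Finset.range (n+1) ×ˢ Finset.range (n+1)).powerset).filter (fun A => IsSecStr n A)

lemma mem_SS {n : ℕ} {A : Finset (ℕ × ℕ)} : A ∈ SS n ↔ IsSecStr n A := by
  classical
  simp only [SS, Finset.mem_filter, Finset.mem_powerset, and_iff_right_iff_imp]
  intro h p hp
  have := h.1 p hp
  simp only [Finset.mem_product, Finset.mem_range]
  omega

lemma S₂_eq (n : ℕ) : S₂ n = (SS n).card := by
  rw [S₂, ← Nat.card_eq_finsetCard]
  exact Nat.card_congr (Equiv.subtypeEquivRight (fun A => mem_SS.symm))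

lemma SS_small {n : ℕ} (hn : n ≤ 2) : SS n = {∅} := by
  ext A
  simp only [mem_SS, Finset.mem_singleton]
  constructor
  · rintro ⟨h1, -, -⟩
    by_contra h
    obtain ⟨p, hp⟩ := Finset.nonempty_iff_ne_empty.2 h
    have := h1 p hp; omega
  · rintro rfl
    refine ⟨?_, ?_, ?_⟩ <;> simp

lemma split {n k : ℕ} {A : Finset (ℕ × ℕ)} (hA : IsSecStr (n+3) A) (hk : (k, n+3) ∈ A) :
    ∀ p ∈ A, p ≠ (k, n+3) → p.2 < k ∨ (k < p.1 ∧ p.2 ≤ n+2) := by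
  obtain ⟨h1, h2, h3⟩ := hA
  intro p hp hne
  have hb := h1 p hp
  have hd := h2 p hp _ hk hne
  have hc := h3 p hp _ hk
  simp only at hd hc
  omega

lemma card_W (n k : ℕ) (hk1 : 1 ≤ k) (hk2 : k ≤ n+1) :
    ((SS (n+3)).filter (fun A => (k, n+3) ∈ A)).card
      = (SS (k-1) ×ˢ SS (n+2-k)).card := by
  refine Finset.card_nbij'
    (i := fun A => (A.filter (fun p => p.2 < k),
      (A.filter (fun p => k < p.1)).image (fun p => (p.1 - k, p.2 - k))))
    (j := fun BC => insert (k, n+3) (BC.1 ∪ BC.2.image (fun p => (p.1 + k, p.2 + k))))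
    ?_ ?_ ?_ ?_
  · -- hi : the two components form secondary structures
    intro A hA
    rw [Finset.mem_coe, Finset.mem_filter] at hA
    obtain ⟨hASS, hkA⟩ := hA
    rw [mem_SS] at hASS
    have key := split hASS hkA
    obtain ⟨h1, h2, h3⟩ := hASS
    rw [Finset.mem_coe, Finset.mem_product]
    constructor
    · rw [mem_SS]
      refine ⟨?_, ?_, ?_⟩
      · intro p hp
        rw [Finset.mem_filter] at hp
        have := h1 p hp.1
        have h2k := hp.2
        omega
      · intro p hp q hq hne
        exact h2 p (Finset.mem_filter.1 hp).1 q (Finset.mem_filter.1 hq).1 hne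
      · intro p hp q hq
        exact h3 p (Finset.mem_filter.1 hp).1 q (Finset.mem_filter.1 hq).1
    · rw [mem_SS]
      have hmem : ∀ p ∈ A.filter (fun p => k < p.1),
          k < p.1 ∧ p.1 + 2 ≤ p.2 ∧ p.2 ≤ n+2 ∧ p ∈ A := by
        intro p hp
        rw [Finset.mem_filter] at hp
        have hb := h1 p hp.1
        have hne : p ≠ (k, n+3) := by
          intro h; rw [h] at hp; exact absurd hp.2 (lt_irrefl k)
        have := key p hp.1 hne
        exact ⟨hp.2, by omega, by omega, hp.1⟩
      refine ⟨?_, ?_, ?_⟩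
      · intro p hp
        rw [Finset.mem_image] at hp
        obtain ⟨q, hq, rfl⟩ := hp
        have := hmem q hq
        dsimp only
        omega
      · intro p hp q hq hne
        rw [Finset.mem_image] at hp hq
        obtain ⟨a, ha, rfl⟩ := hp
        obtain ⟨b, hb, rfl⟩ := hq
        have hma := hmem a ha
        have hmb := hmem b hb
        have hab : a ≠ b := by rintro rfl; exact hne rfl
        have := h2 a hma.2.2.2 b hmb.2.2.2 hab
        dsimp only at this ⊢
        omega
      · intro p hp q hq
        rw [Finset.mem_image] at hp hq
        obtain ⟨a, ha, rfl⟩ := hp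
        obtain ⟨b, hb, rfl⟩ := hq
        have hma := hmem a ha
        have hmb := hmem b hb
        have := h3 a hma.2.2.2 b hmb.2.2.2
        dsimp only at this ⊢
        omega
  · -- hj : combined structure is a secondary structure containing (k, n+3)
    intro BC hBC
    rw [Finset.mem_coe, Finset.mem_product] at hBC
    obtain ⟨hB, hC⟩ := hBC
    rw [mem_SS] at hB hC
    obtain ⟨b1, b2, b3⟩ := hB
    obtain ⟨c1, c2, c3⟩ := hC
    rw [Finset.mem_coe, Finset.mem_filter]
    refine ⟨?_, Finset.mem_insert_self _ _⟩
    rw [mem_SS]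
    have hcase : ∀ p ∈ insert (k, n+3) (BC.1 ∪ BC.2.image (fun p => (p.1 + k, p.2 + k))),
        p = (k, n+3) ∨ p ∈ BC.1 ∨ ∃ c ∈ BC.2, (c.1 + k, c.2 + k) = p := by
      intro p hp
      simpa [Finset.mem_insert, Finset.mem_union, Finset.mem_image] using hp
    refine ⟨?_, ?_, ?_⟩
    · intro p hp
      rcases hcase p hp with rfl | hpB | ⟨c, hc, rfl⟩
      · dsimp only; omega
      · have := b1 p hpB; omega
      · have := c1 c hc; dsimp only; omega
    · intro p hp q hq hne
      rcases hcase p hp with rfl | hpB | ⟨a, ha, rfl⟩ <;>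
        rcases hcase q hq with rfl | hqB | ⟨b, hb, rfl⟩
      · exact absurd rfl hne
      · have := b1 q hqB; dsimp only; omega
      · have := c1 b hb; dsimp only; omega
      · have := b1 p hpB; dsimp only; omega
      · exact b2 p hpB q hqB hne
      · have hx := b1 p hpB; have hy := c1 b hb; dsimp only; omega
      · have := c1 a ha; dsimp only; omega
      · have hx := c1 a ha; have hy := b1 q hqB; dsimp only; omega
      · have hab : a ≠ b := by rintro rfl; exact hne rfl
        have := c2 a ha b hb hab
        have hx := c1 a ha; have hy := c1 b hb
        dsimp only at this ⊢
        omega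
    · intro p hp q hq
      rcases hcase p hp with rfl | hpB | ⟨a, ha, rfl⟩ <;>
        rcases hcase q hq with rfl | hqB | ⟨b, hb, rfl⟩
      · dsimp only; omega
      · have := b1 q hqB; dsimp only; omega
      · have := c1 b hb; dsimp only; omega
      · have := b1 p hpB; dsimp only; omega
      · exact b3 p hpB q hqB
      · have hx := b1 p hpB; have hy := c1 b hb; dsimp only; omega
      · have := c1 a ha; dsimp only; omega
      · have hx := c1 a ha; have hy := b1 q hqB; dsimp only; omega
      · have := c3 a ha b hb
        have hx := c1 a ha; have hy := c1 b hb
        dsimp only at this ⊢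
        omega
  · -- left_inv : reconstruct A
    intro A hA
    rw [Finset.mem_coe, Finset.mem_filter] at hA
    obtain ⟨hASS, hkA⟩ := hA
    rw [mem_SS] at hASS
    have key := split hASS hkA
    have h1 := hASS.1
    dsimp only
    ext p
    simp only [Finset.mem_insert, Finset.mem_union, Finset.mem_image, Finset.mem_filter]
    constructor
    · rintro (rfl | ⟨hp, -⟩ | ⟨q, ⟨r, ⟨hrA, hrk⟩, rfl⟩, rfl⟩)
      · exact hkA
      · exact hp
      · have hb := h1 r hrA
        have : (r.1 - k + k, r.2 - k + k) = r := by
          obtain ⟨r1, r2⟩ := r; dsimp only at *; rw [Prod.mk.injEq]; omega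
        rw [this]; exact hrA
    · intro hp
      rcases eq_or_ne p (k, n+3) with rfl | hne
      · exact Or.inl rfl
      · rcases key p hp hne with h | h
        · exact Or.inr (Or.inl ⟨hp, h⟩)
        · refine Or.inr (Or.inr ⟨(p.1 - k, p.2 - k), ⟨p, ⟨hp, h.1⟩, rfl⟩, ?_⟩)
          have hb := h1 p hp
          obtain ⟨p1, p2⟩ := p; dsimp only at *; rw [Prod.mk.injEq]; omega
  · -- right_inv : reconstruct (B, C)
    intro BC hBC
    rw [Finset.mem_coe, Finset.mem_product] at hBC
    obtain ⟨hB, hC⟩ := hBC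
    rw [mem_SS] at hB hC
    have b1 := hB.1
    have c1 := hC.1
    dsimp only
    rw [Prod.mk.injEq]
    constructor
    · ext p
      simp only [Finset.mem_filter, Finset.mem_insert, Finset.mem_union, Finset.mem_image]
      constructor
      · rintro ⟨rfl | hpB | ⟨c, hc, rfl⟩, hlt⟩
        · dsimp only at hlt; omega
        · exact hpB
        · have := c1 c hc; dsimp only at hlt; omega
      · intro hpB
        have := b1 p hpB
        exact ⟨Or.inr (Or.inl hpB), by omega⟩
    · have hfe : (insert (k, n+3) (BC.1 ∪ BC.2.image (fun p => (p.1 + k, p.2 + k)))).filter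
          (fun p => k < p.1) = BC.2.image (fun p => (p.1 + k, p.2 + k)) := by
        ext p
        simp only [Finset.mem_filter, Finset.mem_insert, Finset.mem_union, Finset.mem_image]
        constructor
        · rintro ⟨rfl | hpB | ⟨c, hc, rfl⟩, hgt⟩
          · dsimp only at hgt; omega
          · have := b1 p hpB; omega
          · exact ⟨c, hc, rfl⟩
        · rintro ⟨c, hc, rfl⟩
          have := c1 c hc
          exact ⟨Or.inr (Or.inr ⟨c, hc, rfl⟩), by dsimp only; omega⟩
      rw [hfe, Finset.image_image]
      have : ((fun p : ℕ × ℕ => (p.1 - k, p.2 - k)) ∘ (fun p : ℕ × ℕ => (p.1 + k, p.2 + k)))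
          = id := by
        funext p
        simp [Function.comp, Nat.add_sub_cancel]
      rw [this, Finset.image_id]

lemma filter_no_last (n : ℕ) :
    (SS (n+3)).filter (fun A => ∀ p ∈ A, p.2 ≠ n+3) = SS (n+2) := by
  ext A
  simp only [Finset.mem_filter, mem_SS]
  constructor
  · rintro ⟨⟨h1, h2, h3⟩, hP⟩
    refine ⟨?_, h2, h3⟩
    intro p hp
    have := h1 p hp
    have := hP p hp
    omega
  · rintro ⟨h1, h2, h3⟩
    refine ⟨⟨?_, h2, h3⟩, ?_⟩
    · intro p hp; have := h1 p hp; omega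
    · intro p hp; have := h1 p hp; omega

lemma filter_last (n : ℕ) :
    (SS (n+3)).filter (fun A => ¬ ∀ p ∈ A, p.2 ≠ n+3)
      = (Finset.Icc 1 (n+1)).biUnion
          (fun k => (SS (n+3)).filter (fun A => (k, n+3) ∈ A)) := by
  ext A
  simp only [Finset.mem_filter, Finset.mem_biUnion, Finset.mem_Icc]
  constructor
  · rintro ⟨hSS, hP⟩
    push_neg at hP
    obtain ⟨p, hp, hp2⟩ := hP
    have h1 := (mem_SS.1 hSS).1 p hp
    refine ⟨p.1, by omega, hSS, ?_⟩
    have : p = (p.1, n+3) := by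
      obtain ⟨a, b⟩ := p; dsimp only at hp2 ⊢; rw [hp2]
    rwa [← this]
  · rintro ⟨k, hk, hSS, hkA⟩
    refine ⟨hSS, ?_⟩
    push_neg
    exact ⟨(k, n+3), hkA, rfl⟩

/-- The number `S₂(n)` of RNA secondary structures on `n` vertices satisfies
`S₂(n) = S₂(n-1) + Σ_{j=0}^{n-3} S₂(n-2-j)·S₂(j)` for `n ≥ 3`, with `S₂(n) = 1` for
`0 ≤ n ≤ 2`. -/
theorem secondary_structure_recursion :
    S₂ 0 = 1 ∧ S₂ 1 = 1 ∧ S₂ 2 = 1 ∧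
    ∀ m : ℕ, S₂ (m + 3) =
      S₂ (m + 2) + ∑ j ∈ Finset.range (m + 1), S₂ (m + 1 - j) * S₂ j := by
  have base : ∀ n, n ≤ 2 → S₂ n = 1 := by
    intro n hn
    rw [S₂_eq, SS_small hn, Finset.card_singleton]
  refine ⟨base 0 (by norm_num), base 1 (by norm_num), base 2 (by norm_num), ?_⟩
  intro m
  have hsplit := Finset.card_filter_add_card_filter_not
    (s := SS (m+3)) (p := fun A => ∀ p ∈ A, p.2 ≠ m+3)
  have hdisj : ∀ k ∈ Finset.Icc 1 (m+1), ∀ k' ∈ Finset.Icc 1 (m+1), k ≠ k' →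
      Disjoint ((SS (m+3)).filter (fun A => (k, m+3) ∈ A))
        ((SS (m+3)).filter (fun A => (k', m+3) ∈ A)) := by
    intro k _ k' _ hne
    rw [Finset.disjoint_left]
    intro A hA hA'
    rw [Finset.mem_filter] at hA hA'
    have h2 := (mem_SS.1 hA.1).2.1
    have hpq : ((k : ℕ), m+3) ≠ (k', m+3) := fun h => hne (congrArg Prod.fst h)
    exact (h2 _ hA.2 _ hA'.2 hpq).2.2.2 rfl
  have hcard : (SS (m+3)).card
      = (SS (m+2)).card + ∑ k ∈ Finset.Icc 1 (m+1),
          ((SS (m+3)).filter (fun A => (k, m+3) ∈ A)).card := by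
    rw [← hsplit, filter_no_last, filter_last, Finset.card_biUnion hdisj]
  rw [S₂_eq, hcard, ← S₂_eq]
  congr 1
  have hsum : ∀ k ∈ Finset.Icc 1 (m+1),
      ((SS (m+3)).filter (fun A => (k, m+3) ∈ A)).card = S₂ (k-1) * S₂ (m+2-k) := by
    intro k hk
    rw [Finset.mem_Icc] at hk
    rw [card_W m k hk.1 hk.2, Finset.card_product, ← S₂_eq, ← S₂_eq]
  rw [Finset.sum_congr rfl hsum]
  rw [show Finset.Icc 1 (m+1)
      = Finset.map ⟨fun j => j+1, add_left_injective 1⟩ (Finset.range (m+1)) from ?_]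
  · rw [Finset.sum_map]
    apply Finset.sum_congr rfl
    intro j hj
    rw [Finset.mem_range] at hj
    simp only [Function.Embedding.coeFn_mk]
    have e1 : j+1-1 = j := by omega
    have e2 : m+2-(j+1) = m+1-j := by omega
    rw [e1, e2, Nat.mul_comm]
  · ext k
    simp only [Finset.mem_Icc, Finset.mem_map, Finset.mem_range,
      Function.Embedding.coeFn_mk]
    constructor
    · intro h; exact ⟨k-1, by omega, by omega⟩
    · rintro ⟨j, hj, rfl⟩; omega
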